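/- For every ε>0 there exist constants c'_ε, c''_ε > 0 such that for all n ∈ ℕ, ℙ[ ℙ_𝓛[ min_{|u| = n} V(u) ≤ −c'_ε n ] ≤ e^{−c''_ε n} ] ≥ 1 − ε. -/

import Mathlib

noncomputable section

/-- The data of a branching random walk in time-inhomogeneous random environment
(BRWre): an i.i.d. integer-valued environment `(𝓛_k)_{k≥1}` with `𝓛_1 ≥ 2` a.s. and
`Var[log 𝓛_1] < ∞`, a quenched law `ℙ_𝓛` (a Markov kernel in the environment) under
which the displacements attached to the vertices of the genealogical tree are i.i.d.
standard Gaussians, together with a driving Brownian motion `B` (independent of the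
displacements) used to define the barrier probabilities `p_t`. -/
structure BRWre where
  /-- sample space of the environment -/
  Ωe : Type
  [mΩe : MeasurableSpace Ωe]
  /-- the law `ℙ` of the environment -/
  Pe : MeasureTheory.Measure Ωe
  [hPe : MeasureTheory.IsProbabilityMeasure Pe]
  /-- the environment `(𝓛_k)_{k ≥ 1}` of offspring numbers -/
  L : ℕ → Ωe → ℕ
  hLmeas : ∀ k, Measurable (L k)
  /-- the `𝓛_k` are independent -/
  hLindep : ProbabilityTheory.iIndepFun L Pe
  /-- the `𝓛_k` are identically distributed -/
  hLident : ∀ k, ProbabilityTheory.IdentDistrib (L k) (L 1) Pe Pe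
  /-- `𝓛_1 ≥ 2` a.s. -/
  hL2 : ∀ᵐ ω ∂Pe, 2 ≤ L 1 ω
  /-- `Var[log 𝓛_1] < ∞` -/
  hLvar : MeasureTheory.MemLp (fun ω => Real.log (L 1 ω)) 2 Pe
  /-- sample space of the quenched randomness -/
  Ωq : Type
  [mΩq : MeasurableSpace Ωq]
  /-- the quenched laws `ℙ_𝓛`, as a kernel in the environment -/
  PL : ProbabilityTheory.Kernel Ωe Ωq
  [hPL : ProbabilityTheory.IsMarkovKernel PL]
  /-- the displacements attached to the vertices of the genealogical tree, the
  vertices being indexed by finite sequences of integers -/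
  ξ : List ℕ → Ωq → ℝ
  hξmeas : ∀ u, Measurable (ξ u)
  /-- quenched, the displacements are independent ... -/
  hξindep : ∀ ω, ProbabilityTheory.iIndepFun ξ (PL ω)
  /-- ... standard Gaussians -/
  hξgauss : ∀ ω u, (PL ω).map (ξ u) = ProbabilityTheory.gaussianReal 0 1
  /-- a Brownian motion under the quenched law -/
  B : ℝ → Ωq → ℝ
  hBmeas : ∀ s, Measurable (B s)
  hB0 : ∀ ω, ∀ᵐ ωq ∂PL ω, B 0 ωq = 0
  hBcont : ∀ ω, ∀ᵐ ωq ∂PL ω, Continuous fun s => B s ωq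
  hBgauss : ∀ ω, ∀ s t : ℝ, 0 ≤ s → s ≤ t →
    (PL ω).map (fun ωq => B t ωq - B s ωq) =
      ProbabilityTheory.gaussianReal 0 (Real.toNNReal (t - s))
  hBincr : ∀ ω (n : ℕ) (τ : Fin (n + 1) → ℝ), Monotone τ → (∀ i, 0 ≤ τ i) →
    ProbabilityTheory.iIndepFun
      (fun i : Fin n => fun ωq => B (τ i.succ) ωq - B (τ i.castSucc) ωq) (PL ω)
  /-- the Brownian motion is independent of the displacements -/
  hBindep : ∀ ω (s : ℝ) (u : List ℕ), ProbabilityTheory.IndepFun (B s) (ξ u) (PL ω)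

open MeasureTheory ProbabilityTheory Filter Set
open scoped ProbabilityTheory

namespace BRWre

variable (X : BRWre)

instance : MeasurableSpace X.Ωe := X.mΩe
instance : MeasurableSpace X.Ωq := X.mΩq
instance : IsProbabilityMeasure X.Pe := X.hPe
instance : IsMarkovKernel X.PL := X.hPL

/-- `θ* = sqrt(2 𝔼[log 𝓛_1])` -/
def θ : ℝ := Real.sqrt (2 * ∫ ω, Real.log (X.L 1 ω) ∂X.Pe)

/-- `K_n = Σ_{k=1}^n κ_k(θ*) = Σ_{k=1}^n (log 𝓛_k + θ*²/2)` -/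
def K (n : ℕ) (ω : X.Ωe) : ℝ :=
  ∑ k ∈ Finset.Icc 1 n, (Real.log (X.L k ω) + X.θ ^ 2 / 2)

/-- the linear interpolation `W_s` of `W_n = K_n/θ* − nθ*` -/
def W (s : ℝ) (ω : X.Ωe) : ℝ :=
  (1 - (s - ⌊s⌋₊)) * (X.K ⌊s⌋₊ ω / X.θ - ⌊s⌋₊ * X.θ) +
    (s - ⌊s⌋₊) * (X.K (⌊s⌋₊ + 1) ω / X.θ - (⌊s⌋₊ + 1 : ℕ) * X.θ)

/-- `T_s = B_s − W_s` -/
def T (s : ℝ) (ω : X.Ωe) (ωq : X.Ωq) : ℝ := X.B s ωq - X.W s ω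

/-- the quenched barrier probability
`p_t = ℙ_𝓛[∀ s ∈ [0,t], ξ₀ + T_s ≤ 0 and ξ₀ + T_t ∈ [ξ₀ − 1, ξ₀]]` -/
def p (ξ0 t : ℝ) (ω : X.Ωe) : ℝ :=
  (X.PL ω {ωq | (∀ s ∈ Icc (0 : ℝ) t, ξ0 + X.T s ω ωq ≤ 0) ∧
      ξ0 + X.T t ω ωq ∈ Icc (ξ0 - 1) ξ0}).toReal

/-- the (random) centering `m_n = (K_n − log p_n)/θ*` -/
def m (ξ0 : ℝ) (n : ℕ) (ω : X.Ωe) : ℝ :=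
  (X.K n ω - Real.log (X.p ξ0 n ω)) / X.θ

/-- the position `V(u)` of the particle indexed by `u`: the sum of the displacements
along its ancestral line -/
def V (u : List ℕ) (ωq : X.Ωq) : ℝ :=
  ∑ k ∈ Finset.range u.length, X.ξ (u.take (k + 1)) ωq

/-- the particles alive in generation `n`, given the environment -/
def alive (ω : X.Ωe) (n : ℕ) : Set (List ℕ) :=
  {u | u.length = n ∧ ∀ k < n, u.getD k 0 < X.L (k + 1) ω}

/-- the maximal displacement `M_n = max_{|u| = n} V(u)` -/
def M (n : ℕ) (ω : X.Ωe) (ωq : X.Ωq) : ℝ :=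
  sSup ((fun u => X.V u ωq) '' X.alive ω n)

end BRWre

open Real
open scoped ENNReal NNReal

section Helpers

lemma iIndepFun_precomp {ι κ Ω : Type*} [MeasurableSpace Ω] {μ : Measure Ω}
    {f : κ → Ω → ℝ} (hf : iIndepFun f μ)
    {g : ι → κ} (hg : Function.Injective g) :
    iIndepFun (fun i => f (g i)) μ := by
  classical
  rw [iIndepFun_iff_measure_inter_preimage_eq_mul] at hf ⊢
  intro S sets hsets
  set sets' : κ → Set ℝ := Function.extend g sets (fun _ => Set.univ) with hsets'
  have hext : ∀ i, sets' (g i) = sets i := fun i => hg.extend_apply _ _ _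
  have h1 : ∀ i ∈ S, (f (g i)) ⁻¹' (sets i) = (f (g i)) ⁻¹' (sets' (g i)) := by
    intro i _; rw [hext]
  have h2 := hf (S.image g) (sets := sets') ?_
  · calc μ (⋂ i ∈ S, (f (g i)) ⁻¹' (sets i))
        = μ (⋂ k ∈ S.image g, (f k) ⁻¹' (sets' k)) := by
          rw [Finset.set_biInter_finset_image]
          congr 1
          exact Set.iInter₂_congr h1
      _ = ∏ k ∈ S.image g, μ ((f k) ⁻¹' (sets' k)) := h2
      _ = ∏ i ∈ S, μ ((f (g i)) ⁻¹' (sets i)) := by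
          rw [Finset.prod_image (fun a _ b _ h => hg h)]
          exact Finset.prod_congr rfl fun i hi => by rw [hext]
  · intro k hk
    obtain ⟨i, hi, rfl⟩ := Finset.mem_image.mp hk
    rw [hext]
    exact hsets i hi

lemma gauss_pdf_mul_exp (t x : ℝ) :
    gaussianPDFReal 0 1 x * Real.exp (t * x) =
      Real.exp (t ^ 2 / 2) * gaussianPDFReal t 1 x := by
  simp only [gaussianPDFReal, NNReal.coe_one, mul_one, sub_zero]
  rw [mul_assoc, ← Real.exp_add, mul_comm (Real.exp (t ^ 2 / 2)), mul_assoc, ← Real.exp_add]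
  congr 1
  ring_nf

lemma gauss_exp_integrable (t : ℝ) :
    Integrable (fun x => Real.exp (t * x)) (gaussianReal 0 1) := by
  rw [gaussianReal_of_var_ne_zero _ one_ne_zero]
  have hm : Measurable fun x => (gaussianPDFReal 0 1 x).toNNReal :=
    (measurable_gaussianPDFReal 0 1).real_toNNReal
  have h1 : (gaussianPDF 0 1) = fun x => ((gaussianPDFReal 0 1 x).toNNReal : ℝ≥0∞) := by
    funext x; rfl
  rw [h1, integrable_withDensity_iff_integrable_coe_smul hm]
  simp only [NNReal.smul_def, smul_eq_mul]
  have heq : (fun x => ((gaussianPDFReal 0 1 x).toNNReal : ℝ) * Real.exp (t * x)) =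
      fun x => Real.exp (t ^ 2 / 2) * gaussianPDFReal t 1 x := by
    funext x
    rw [Real.coe_toNNReal _ (gaussianPDFReal_nonneg 0 1 x), gauss_pdf_mul_exp]
  rw [heq]
  exact (integrable_gaussianPDFReal t 1).const_mul _

lemma gauss_exp_integral (t : ℝ) :
    ∫ x, Real.exp (t * x) ∂(gaussianReal 0 1) = Real.exp (t ^ 2 / 2) := by
  rw [gaussianReal_of_var_ne_zero _ one_ne_zero]
  have hm : Measurable fun x => (gaussianPDFReal 0 1 x).toNNReal :=
    (measurable_gaussianPDFReal 0 1).real_toNNReal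
  have h1 : (gaussianPDF 0 1) = fun x => ((gaussianPDFReal 0 1 x).toNNReal : ℝ≥0∞) := by
    funext x; rfl
  rw [h1, integral_withDensity_eq_integral_smul hm]
  simp only [NNReal.smul_def, smul_eq_mul]
  have heq : (fun x => ((gaussianPDFReal 0 1 x).toNNReal : ℝ) * Real.exp (t * x)) =
      fun x => Real.exp (t ^ 2 / 2) * gaussianPDFReal t 1 x := by
    funext x
    rw [Real.coe_toNNReal _ (gaussianPDFReal_nonneg 0 1 x), gauss_pdf_mul_exp]
  rw [heq, integral_const_mul, integral_gaussianPDFReal_eq_one t one_ne_zero, mul_one]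

variable {Ω : Type*} [MeasurableSpace Ω] {μ : Measure Ω}

lemma gauss_map_exp_integrable {X : Ω → ℝ} (hX : Measurable X)
    (hmap : μ.map X = gaussianReal 0 1) (t : ℝ) :
    Integrable (fun ω => Real.exp (t * X ω)) μ := by
  have := gauss_exp_integrable t
  rw [← hmap] at this
  exact (integrable_map_measure (Measurable.aestronglyMeasurable (by fun_prop))
    hX.aemeasurable).mp this

lemma gauss_map_mgf {X : Ω → ℝ} (hX : Measurable X)
    (hmap : μ.map X = gaussianReal 0 1) (t : ℝ) :
    mgf X μ t = Real.exp (t ^ 2 / 2) := by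
  rw [mgf]
  have : ∫ ω, Real.exp (t * X ω) ∂μ = ∫ x, Real.exp (t * x) ∂(μ.map X) := by
    rw [integral_map hX.aemeasurable (Measurable.aestronglyMeasurable (by fun_prop))]
  rw [this, hmap, gauss_exp_integral]

end Helpers

namespace BRWre

variable (X : BRWre)

/-- the `alive` set as a finset -/
def aliveFinset (ω : X.Ωe) (n : ℕ) : Finset (List ℕ) :=
  (Fintype.piFinset fun k : Fin n => Finset.range (X.L (k + 1) ω)).image List.ofFn

lemma alive_eq_coe (ω : X.Ωe) (n : ℕ) : X.alive ω n = ↑(X.aliveFinset ω n) := by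
  ext u
  simp only [aliveFinset, Finset.coe_image, Set.mem_image, Finset.mem_coe,
    Fintype.mem_piFinset, Finset.mem_range, alive, Set.mem_setOf_eq]
  constructor
  · rintro ⟨hlen, hlt⟩
    refine ⟨fun k => u.getD k 0, fun k => hlt k (hlen ▸ k.isLt), ?_⟩
    refine List.ext_getElem (by simp [hlen]) fun i h1 h2 => ?_
    rw [List.getElem_ofFn]
    exact List.getD_eq_getElem u 0 h2
  · rintro ⟨f, hf, rfl⟩
    refine ⟨List.length_ofFn, fun k hk => ?_⟩
    rw [List.getD_eq_getElem _ 0 (by simpa [List.length_ofFn] using hk), List.getElem_ofFn]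
    exact hf _

lemma card_aliveFinset (ω : X.Ωe) (n : ℕ) :
    (X.aliveFinset ω n).card = ∏ k : Fin n, X.L (k + 1) ω := by
  rw [aliveFinset, Finset.card_image_of_injective _ List.ofFn_injective,
    Fintype.card_piFinset]
  simp

lemma chernoff (ω : X.Ωe) {n : ℕ} {u : List ℕ} (hu : u.length = n) (b : ℝ) :
    (X.PL ω {ωq | X.V u ωq ≤ b}).toReal ≤
      Real.exp b * Real.exp ((1 : ℝ) / 2) ^ n := by
  classical
  set Y : Fin n → X.Ωq → ℝ := fun k => X.ξ (u.take (k.1 + 1)) with hY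
  have hginj : Function.Injective (fun k : Fin n => u.take (k.1 + 1)) := by
    intro a b h
    have := congrArg List.length h
    simp only [List.length_take, hu] at this
    have ha : a.1 + 1 ≤ n := a.isLt
    have hb : b.1 + 1 ≤ n := b.isLt
    rw [min_eq_left ha, min_eq_left hb] at this
    exact Fin.ext (by omega)
  have hYindep : iIndepFun Y (X.PL ω) :=
    iIndepFun_precomp (X.hξindep ω) hginj
  have hYmeas : ∀ i, Measurable (Y i) := fun i => X.hξmeas _
  have hVY : X.V u = ∑ i, Y i := by
    funext ωq
    rw [V, hu, Finset.sum_apply, ← Fin.sum_univ_eq_sum_range (fun k => X.ξ (u.take (k + 1)) ωq) n]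
  have hint : ∀ i ∈ Finset.univ, Integrable (fun ωq => Real.exp ((-1) * Y i ωq)) (X.PL ω) :=
    fun i _ => gauss_map_exp_integrable (hYmeas i) (X.hξgauss ω _) _
  have hIntSum : Integrable (fun ωq => Real.exp ((-1) * X.V u ωq)) (X.PL ω) := by
    rw [hVY]
    exact hYindep.integrable_exp_mul_sum hYmeas hint
  have hmgf : mgf (X.V u) (X.PL ω) (-1) = Real.exp ((1 : ℝ) / 2) ^ n := by
    rw [hVY, hYindep.mgf_sum hYmeas Finset.univ]
    have heach : ∀ i : Fin n, mgf (Y i) (X.PL ω) (-1) = Real.exp ((1 : ℝ) / 2) := fun i => by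
      rw [gauss_map_mgf (hYmeas i) (X.hξgauss ω _)]; norm_num
    rw [Finset.prod_congr rfl fun i _ => heach i, Finset.prod_const, Finset.card_univ,
      Fintype.card_fin]
  have := measure_le_le_exp_mul_mgf (μ := X.PL ω) (X := X.V u) (t := -1) b
    (by norm_num) hIntSum
  calc (X.PL ω {ωq | X.V u ωq ≤ b}).toReal
      ≤ Real.exp (-(-1) * b) * mgf (X.V u) (X.PL ω) (-1) := this
    _ = Real.exp b * Real.exp ((1 : ℝ) / 2) ^ n := by rw [hmgf]; norm_num

lemma quenched_bound {ω : X.Ωe} (n : ℕ) (hω : ∀ k : ℕ, 1 ≤ X.L (k + 1) ω) (A b : ℝ)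
    (hS : ∑ k ∈ Finset.range n, Real.log (X.L (k + 1) ω) ≤ A * n) :
    (X.PL ω {ωq | ∃ u ∈ X.alive ω n, X.V u ωq ≤ b}).toReal ≤
      Real.exp (A * n + b + n / 2) := by
  classical
  set S := X.aliveFinset ω n with hSdef
  set r : ℝ := Real.exp b * Real.exp ((1 : ℝ) / 2) ^ n with hr
  have hrpos : 0 < r := by positivity
  have hset : {ωq | ∃ u ∈ X.alive ω n, X.V u ωq ≤ b} =
      ⋃ u ∈ (S : Set (List ℕ)), {ωq | X.V u ωq ≤ b} := by
    rw [X.alive_eq_coe]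
    ext ωq
    simp [hSdef]
  have hlen : ∀ u ∈ S, u.length = n := by
    intro u hu
    have : u ∈ X.alive ω n := by rw [X.alive_eq_coe]; exact hu
    exact this.1
  have hone : ∀ u ∈ S, X.PL ω {ωq | X.V u ωq ≤ b} ≤ ENNReal.ofReal r := by
    intro u hu
    rw [ENNReal.le_ofReal_iff_toReal_le (measure_ne_top _ _) hrpos.le]
    exact X.chernoff ω (hlen u hu) b
  have hcard : (S.card : ℝ) ≤ Real.exp (A * n) := by
    rw [hSdef, X.card_aliveFinset, Nat.cast_prod]
    have hprod : ∏ k : Fin n, (X.L (k.1 + 1) ω : ℝ) =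
        Real.exp (∑ k : Fin n, Real.log (X.L (k.1 + 1) ω)) := by
      rw [Real.exp_sum]
      exact Finset.prod_congr rfl fun k _ => by
        rw [Real.exp_log (by exact_mod_cast hω k.1)]
    rw [hprod]
    apply Real.exp_le_exp.mpr
    rw [Fin.sum_univ_eq_sum_range (fun k => Real.log (X.L (k + 1) ω)) n]
    exact hS
  calc (X.PL ω {ωq | ∃ u ∈ X.alive ω n, X.V u ωq ≤ b}).toReal
      ≤ ((S.card : ℝ≥0∞) * ENNReal.ofReal r).toReal := by
        apply ENNReal.toReal_mono
        · exact ENNReal.mul_ne_top (by simp) ENNReal.ofReal_ne_top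
        · rw [hset]
          refine (measure_biUnion_finset_le _ _).trans ?_
          calc ∑ u ∈ S, X.PL ω {ωq | X.V u ωq ≤ b}
              ≤ ∑ _u ∈ S, ENNReal.ofReal r := Finset.sum_le_sum hone
            _ = (S.card : ℝ≥0∞) * ENNReal.ofReal r := by
                rw [Finset.sum_const, nsmul_eq_mul]
    _ = (S.card : ℝ) * r := by
        rw [ENNReal.toReal_mul, ENNReal.toReal_natCast, ENNReal.toReal_ofReal hrpos.le]
    _ ≤ Real.exp (A * n) * r := by
        apply mul_le_mul_of_nonneg_right hcard hrpos.le
    _ = Real.exp (A * n + b + n / 2) := by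
        rw [hr, ← Real.exp_nat_mul, ← Real.exp_add, ← Real.exp_add]
        congr 1
        ring

lemma env_bound {ε : ℝ} (hε : 0 < ε) (n : ℕ) (hn : 1 ≤ n) :
    1 - ε ≤ (X.Pe {ω | ∑ k ∈ Finset.range n, Real.log (X.L (k + 1) ω) ≤
      ((∫ ω, Real.log (X.L 1 ω) ∂X.Pe) +
        Real.sqrt (variance (fun ω => Real.log (X.L 1 ω)) X.Pe / ε) + 1) * n}).toReal := by
  classical
  set μ0 := ∫ ω, Real.log (X.L 1 ω) ∂X.Pe with hμ0
  set σ2 := variance (fun ω => Real.log (X.L 1 ω)) X.Pe with hσ2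
  set bb := Real.sqrt (σ2 / ε) + 1 with hbb
  have hσ2nonneg : 0 ≤ σ2 := variance_nonneg _ _
  have hbbpos : 0 < bb := by positivity
  set ℓ : ℕ → X.Ωe → ℝ := fun k ω => Real.log (X.L k ω) with hℓ
  have hφ : Measurable fun m : ℕ => Real.log m := Measurable.of_discrete
  have hmeas : ∀ k, Measurable (ℓ k) := fun k => hφ.comp (X.hLmeas k)
  have hident : ∀ k : ℕ, IdentDistrib (ℓ (k + 1)) (ℓ 1) X.Pe X.Pe :=
    fun k => (X.hLident (k + 1)).comp hφ
  have hmem : ∀ k : ℕ, MemLp (ℓ (k + 1)) 2 X.Pe :=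
    fun k => (hident k).symm.memLp_snd X.hLvar
  set F : X.Ωe → ℝ := ∑ k ∈ Finset.range n, ℓ (k + 1) with hF
  have hFapp : ∀ ω, F ω = ∑ k ∈ Finset.range n, ℓ (k + 1) ω := fun ω => by
    rw [hF, Finset.sum_apply]
  have hFmem : MemLp F 2 X.Pe := memLp_finset_sum' _ fun k _ => hmem k
  have hFmeas : Measurable F := by
    have h := Finset.measurable_sum (Finset.range n) fun k _ => hmeas (k + 1)
    have heq : F = fun ω => ∑ k ∈ Finset.range n, ℓ (k + 1) ω := funext hFapp
    rw [heq]; exact h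
  have hEF : ∫ ω, F ω ∂X.Pe = n * μ0 := by
    rw [hF]
    have : ∫ ω, (∑ k ∈ Finset.range n, ℓ (k + 1)) ω ∂X.Pe =
        ∑ k ∈ Finset.range n, ∫ ω, ℓ (k + 1) ω ∂X.Pe := by
      simp only [Finset.sum_apply]
      exact integral_finset_sum _ fun k _ => (hmem k).integrable one_le_two
    rw [this, Finset.sum_congr rfl fun k _ => (hident k).integral_eq]
    simp [mul_comm]
    exact Or.inl rfl
  have hVarF : variance F X.Pe = n * σ2 := by
    rw [hF, IndepFun.variance_sum (fun k _ => hmem k) ?_]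
    · rw [Finset.sum_congr rfl fun k _ => (hident k).variance_eq]
      simp [mul_comm]
      exact Or.inl rfl
    · intro i _ j _ hij
      exact (X.hLindep.indepFun (by omega : i + 1 ≠ j + 1)).comp hφ hφ
  set G := {ω | ∑ k ∈ Finset.range n, Real.log (X.L (k + 1) ω) ≤ (μ0 + Real.sqrt (σ2 / ε) + 1) * n}
    with hG
  have hGmeas : MeasurableSet G := by
    rw [hG]
    exact measurableSet_le (Finset.measurable_sum _ fun k _ => hmeas (k + 1)) measurable_const
  have hsub : Gᶜ ⊆ {ω | (n : ℝ) * bb ≤ |F ω - ∫ ω, F ω ∂X.Pe|} := by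
    intro ω hω
    rw [hG] at hω
    simp only [Set.mem_compl_iff, Set.mem_setOf_eq, not_le] at hω
    have hFω : (μ0 + Real.sqrt (σ2 / ε) + 1) * n < F ω := by rw [hFapp]; exact hω
    rw [Set.mem_setOf_eq, hEF]
    have : (n : ℝ) * bb ≤ F ω - n * μ0 := by rw [hbb]; nlinarith
    exact le_trans this (le_abs_self _)
  have hnpos : (0 : ℝ) < n := by exact_mod_cast hn
  have hcheb := meas_ge_le_variance_div_sq (μ := X.Pe) hFmem
    (mul_pos hnpos hbbpos)
  have hbound : variance F X.Pe / ((n : ℝ) * bb) ^ 2 ≤ ε := by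
    rw [hVarF]
    have hkey : σ2 ≤ ε * bb ^ 2 := by
      have h1 : Real.sqrt (σ2 / ε) ^ 2 = σ2 / ε := Real.sq_sqrt (by positivity)
      have h2 : Real.sqrt (σ2 / ε) ^ 2 ≤ bb ^ 2 := by
        apply sq_le_sq' <;> nlinarith [Real.sqrt_nonneg (σ2 / ε)]
      rw [h1] at h2
      calc σ2 = ε * (σ2 / ε) := by field_simp
        _ ≤ ε * bb ^ 2 := by nlinarith
    rw [div_le_iff₀ (by positivity)]
    have hn1 : (1 : ℝ) ≤ n := by exact_mod_cast hn
    nlinarith [mul_le_mul_of_nonneg_left hkey hnpos.le, sq_nonneg bb,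
      mul_nonneg (mul_nonneg hε.le (sq_nonneg bb))
        (mul_nonneg hnpos.le (by linarith : (0 : ℝ) ≤ (n : ℝ) - 1))]
  have hcompl : X.Pe Gᶜ ≤ ENNReal.ofReal ε := by
    refine le_trans (measure_mono hsub) (le_trans hcheb ?_)
    exact ENNReal.ofReal_le_ofReal hbound
  have h1 : (X.Pe Gᶜ).toReal ≤ ε := ENNReal.toReal_le_of_le_ofReal hε.le hcompl
  have h2 := prob_add_prob_compl (μ := X.Pe) hGmeas
  have h3 : (X.Pe G).toReal + (X.Pe Gᶜ).toReal = 1 := by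
    rw [← ENNReal.toReal_add (measure_ne_top _ _) (measure_ne_top _ _), h2, ENNReal.toReal_one]
  linarith

end BRWre

/-- Lemma on the minimum of the BRWre.
For all `ε > 0` there are `c'_ε, c''_ε > 0` such that for all `n ∈ ℕ`,
`ℙ[ℙ_𝓛[min_{|u| = n} V(u) ≤ −c'_ε n] ≤ e^{−c''_ε n}] ≥ 1 − ε`. -/
theorem brwre_min_bound (X : BRWre) :
    ∀ ε : ℝ, 0 < ε → ∃ c' c'' : ℝ, 0 < c' ∧ 0 < c'' ∧ ∀ n : ℕ,
      1 - ε ≤ (X.Pe {ω |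
        (X.PL ω {ωq | ∃ u ∈ X.alive ω n, X.V u ωq ≤ -c' * n}).toReal ≤
          Real.exp (-c'' * n)}).toReal := by
  intro ε hε
  set μ0 := ∫ ω, Real.log (X.L 1 ω) ∂X.Pe with hμ0
  set σ2 := variance (fun ω => Real.log (X.L 1 ω)) X.Pe with hσ2
  set A := μ0 + Real.sqrt (σ2 / ε) + 1 with hA
  have hμ0nonneg : 0 ≤ μ0 := by
    rw [hμ0]
    apply integral_nonneg_of_ae
    filter_upwards [X.hL2] with ω h
    apply Real.log_nonneg
    exact_mod_cast le_trans (by norm_num) h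
  have hc'pos : 0 < A + 1 := by
    have := Real.sqrt_nonneg (σ2 / ε)
    rw [hA]; linarith
  refine ⟨A + 1, 1 / 2, hc'pos, by norm_num, fun n => ?_⟩
  rcases Nat.eq_zero_or_pos n with hn | hn
  · subst hn
    have h1 : X.Pe {ω | (X.PL ω {ωq | ∃ u ∈ X.alive ω 0, X.V u ωq ≤ -(A + 1) * (0 : ℕ)}).toReal ≤
        Real.exp (-(1 / 2) * (0 : ℕ))} = 1 := by
      rw [← measure_univ (μ := X.Pe)]
      apply le_antisymm (measure_mono (Set.subset_univ _))
      apply measure_mono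
      intro ω _
      simp only [Set.mem_setOf_eq, Nat.cast_zero, mul_zero, Real.exp_zero]
      exact ENNReal.toReal_le_of_le_ofReal (by norm_num)
        (le_trans prob_le_one (by simp))
    rw [h1, ENNReal.toReal_one]
    linarith
  · set H := {ω : X.Ωe | ∀ k : ℕ, 2 ≤ X.L (k + 1) ω} with hH
    have hHnull : X.Pe Hᶜ = 0 := by
      have hcup : Hᶜ = ⋃ k : ℕ, {ω | X.L (k + 1) ω < 2} := by
        rw [hH]; ext ω; simp [not_le]
      rw [hcup]
      apply measure_iUnion_null
      intro k
      have hmem := (X.hLident (k + 1)).measure_mem_eq (s := {m : ℕ | m < 2})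
        MeasurableSet.of_discrete
      have h0 : X.Pe {ω | X.L 1 ω < 2} = 0 := by
        have h2 := X.hL2
        rw [ae_iff] at h2
        simpa [not_le] using h2
      calc X.Pe {ω | X.L (k + 1) ω < 2}
          = X.Pe {ω | X.L 1 ω < 2} := by simpa [Set.preimage_setOf_eq] using hmem
        _ = 0 := h0
    set G := {ω : X.Ωe | ∑ k ∈ Finset.range n, Real.log (X.L (k + 1) ω) ≤ A * n} with hG
    have henv := X.env_bound hε n hn
    rw [← hμ0, ← hσ2, ← hA] at henv
    have hsub : G ∩ H ⊆ {ω | (X.PL ω {ωq | ∃ u ∈ X.alive ω n, X.V u ωq ≤ -(A + 1) * n}).toReal ≤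
        Real.exp (-(1 / 2) * n)} := by
      rintro ω ⟨hGω, hHω⟩
      simp only [Set.mem_setOf_eq]
      have hq := X.quenched_bound n (fun k => le_trans one_le_two (hHω k)) A (-(A + 1) * n) hGω
      refine le_trans hq (le_of_eq ?_)
      congr 1
      ring
    have hGH : X.Pe G ≤ X.Pe (G ∩ H) := by
      calc X.Pe G ≤ X.Pe ((G ∩ H) ∪ Hᶜ) := by
            apply measure_mono
            intro ω hω
            by_cases h : ω ∈ H
            exacts [Or.inl ⟨hω, h⟩, Or.inr h]
        _ ≤ X.Pe (G ∩ H) + X.Pe Hᶜ := measure_union_le _ _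
        _ = X.Pe (G ∩ H) := by rw [hHnull, add_zero]
    calc 1 - ε ≤ (X.Pe G).toReal := henv
      _ ≤ (X.Pe {ω | (X.PL ω {ωq | ∃ u ∈ X.alive ω n, X.V u ωq ≤ -(A + 1) * n}).toReal ≤
            Real.exp (-(1 / 2) * n)}).toReal :=
          ENNReal.toReal_mono (measure_ne_top _ _) (le_trans hGH (measure_mono hsub))
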